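/- Let m ≥ 2 and let n ≥ 2 be even. Then the sum Σ_σ (−1)^{|σ|}, taken over all independent sets σ of C_{m,n} such that π(σ) ≠ ∅ and every cyclic gap between consecutive elements of π(σ) is even, equals −2·Z(C_{m−1,n}) + 2·(−1)^{mn/4} if m is even, and equals −2·Z(C_{m−1,n}) if m is odd. -/

import Mathlib

/-- Adjacency in the cylinder graph: vertices are pairs (row, column) with
rows in {1,…,m} (enforced separately) and columns in ℤ/nℤ.  Two distinct
vertices are adjacent iff they are in the same row and their columns differ
by ±1 in ℤ/nℤ, or they are in the same column and their rows differ by 1. -/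
def cylAdj (n : ℕ) (v w : ℕ × ZMod n) : Prop :=
  v ≠ w ∧ ((v.1 = w.1 ∧ (w.2 = v.2 + 1 ∨ v.2 = w.2 + 1)) ∨
    (v.2 = w.2 ∧ (v.1 + 1 = w.1 ∨ w.1 + 1 = v.1)))

/-- `σ` is an independent set of the cylinder graph `C_{m,n}`:
its vertices lie in {1,…,m} × ℤ/nℤ and no two of them are adjacent. -/
def cylIndep (m n : ℕ) (σ : Finset (ℕ × ZMod n)) : Prop :=
  (∀ v ∈ σ, 1 ≤ v.1 ∧ v.1 ≤ m) ∧ ∀ v ∈ σ, ∀ w ∈ σ, ¬ cylAdj n v w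

/-- Partition function of the hard square model at activity −1 on `C_{m,n}`:
`Z(C_{m,n}) = Σ_σ (−1)^{|σ|}` over all independent sets `σ`. -/
noncomputable def Zcyl (m n : ℕ) : ℤ :=
  ∑ᶠ σ ∈ {σ : Finset (ℕ × ZMod n) | cylIndep m n σ}, (-1 : ℤ) ^ σ.card

/-- `π(σ)`: the set of columns `j ∈ ℤ/nℤ` such that `(1,j) ∈ σ`. -/
def piRow (n : ℕ) (σ : Finset (ℕ × ZMod n)) : Finset (ZMod n) :=
  (σ.filter fun v => v.1 = 1).image Prod.snd

/-- For a set `P ⊆ ℤ/nℤ` of columns, `cOffset n P j` is the least `r ≥ 1`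
with `j − r ∈ P` (and `0` if no such `r` exists, i.e. if `P = ∅`).
For `j` a position of an interval of `P` this is the offset `r` of `j` in its
interval (so `j` is an even position iff `cOffset n P j` is positive and even);
for `x ∈ P` it is the length of the interval ending at `x`, i.e. the cyclic gap
from the previous element of `P` to `x`. -/
noncomputable def cOffset (n : ℕ) (P : Finset (ZMod n)) (j : ZMod n) : ℕ :=
  sInf {r : ℕ | 0 < r ∧ j - (r : ZMod n) ∈ P}

/-- `π_e`: the elements of `P` sitting in even position of their interval. -/
noncomputable def piE (n : ℕ) (P : Finset (ZMod n)) : Finset (ZMod n) :=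
  P.filter fun x => 0 < cOffset n P x ∧ Even (cOffset n P x)

/-- `π_o`: the elements of `P` sitting in odd position of their interval. -/
noncomputable def piO (n : ℕ) (P : Finset (ZMod n)) : Finset (ZMod n) :=
  P.filter fun x => Odd (cOffset n P x)

/-- The column `j` is free in `σ`: `(1,j) ∉ σ` and `σ ∪ {(1,j)}` is independent. -/
def freeCol (m n : ℕ) (σ : Finset (ℕ × ZMod n)) (j : ZMod n) : Prop :=
  ((1 : ℕ), j) ∉ σ ∧ cylIndep m n (insert ((1 : ℕ), j) σ)

/-- The closure `σ̂` of `σ`: `σ` together with all `(1,j)` where `j` is a free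
even position of one of the intervals of `σ` (if `π(σ) = ∅` nothing is added,
since then `cOffset` vanishes identically). -/
def clo (m n : ℕ) (σ : Finset (ℕ × ZMod n)) : Set (ℕ × ZMod n) :=
  ↑σ ∪ {v | v.1 = 1 ∧ 0 < cOffset n (piRow n σ) v.2 ∧
    Even (cOffset n (piRow n σ) v.2) ∧ freeCol m n σ v.2}

/-- The equivalence class `X_σ` of `σ`: all independent sets with the same closure. -/
def Xclass (m n : ℕ) (σ : Finset (ℕ × ZMod n)) : Set (Finset (ℕ × ZMod n)) :=
  {τ | cylIndep m n τ ∧ clo m n τ = clo m n σ}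

/- ===== auxiliary development ===== -/

open Finset
open scoped Classical

section Parity
variable {n : ℕ} [NeZero n] (hd : 2 ∣ n)

def par : ZMod n →+* ZMod 2 := ZMod.castHom hd (ZMod 2)

omit [NeZero n] in
lemma par_natCast (r : ℕ) : par hd (r : ZMod n) = (r : ZMod 2) := map_natCast _ r

omit [NeZero n] in
lemma natCast_zmod2_eq_zero_iff (r : ℕ) : (r : ZMod 2) = 0 ↔ Even r := by
  rw [ZMod.natCast_eq_zero_iff]
  exact (even_iff_two_dvd).symm

variable {P : Finset (ZMod n)} {x y : ZMod n}

omit [NeZero n] in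
lemma cOffset_mem (hn : 0 < n) (hy : y ∈ P) :
    0 < cOffset n P x ∧ x - (cOffset n P x : ZMod n) ∈ P := by
  have hne : {r : ℕ | 0 < r ∧ x - (r : ZMod n) ∈ P}.Nonempty := by
    haveI : NeZero n := ⟨hn.ne'⟩
    refine ⟨n + (x - y).val, by omega, ?_⟩
    push_cast
    rw [ZMod.natCast_self, ZMod.natCast_rightInverse (x - y)]
    convert hy using 1
    ring
  exact Nat.sInf_mem hne

omit [NeZero n] in
lemma cOffset_le {r : ℕ} (hr : 0 < r) (hmem : x - (r : ZMod n) ∈ P) : cOffset n P x ≤ r :=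
  Nat.sInf_le ⟨hr, hmem⟩

/-- all gaps even → all same parity -/
lemma same_parity_of_gaps_even (heven : ∀ x ∈ P, Even (cOffset n P x)) :
    ∀ x ∈ P, ∀ y ∈ P, par hd x = par hd y := by
  have key : ∀ d : ℕ, ∀ x ∈ P, ∀ y ∈ P, (x - y).val = d → par hd x = par hd y := by
    intro d
    induction d using Nat.strong_induction_on with
    | _ d ih =>
      intro x hx y hy hval
      rcases Nat.eq_zero_or_pos d with rfl | hdpos
      · have h0 : x - y = 0 := by
          rw [← (ZMod.val_eq_zero (x - y))]; exact hval
        have : x = y := by linear_combination h0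
        rw [this]
      · set g := cOffset n P x with hg
        obtain ⟨hgpos, hgmem⟩ := cOffset_mem (x := x) (NeZero.pos n) hy
        have hgeven : Even g := heven x hx
        have hxd : x - (d : ZMod n) = y := by
          rw [← hval, ZMod.natCast_rightInverse (x - y)]
          ring
        have hgled : g ≤ d := cOffset_le hdpos (by rw [hxd]; exact hy)
        have hpar : par hd x = par hd (x - (g : ZMod n)) := by
          have h1 : par hd x - par hd (x - (g : ZMod n)) = ((g : ℕ) : ZMod 2) := by
            rw [← par_natCast hd g, ← map_sub]; ring_nf
          have h0 : ((g : ℕ) : ZMod 2) = 0 := (natCast_zmod2_eq_zero_iff g).mpr hgeven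
          rw [h0] at h1
          linear_combination h1
        rcases eq_or_lt_of_le hgled with heq | hlt
        · rw [hpar, heq, hxd]
        · have hdn : d < n := hval ▸ ZMod.val_lt (x - y)
          have hsub : x - (g : ZMod n) - y = ((d - g : ℕ) : ZMod n) := by
            rw [Nat.cast_sub hgled, ← hxd]
            ring
          have hvd : (x - (g : ZMod n) - y).val = d - g := by
            rw [hsub, ZMod.val_cast_of_lt (by omega)]
          exact hpar.trans (ih (d - g) (by omega) _ hgmem y hy hvd)
  intro x hx y hy
  exact key _ x hx y hy rfl

/-- all same parity → all gaps even -/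
lemma gaps_even_of_same_parity {c : ZMod 2} (hc : ∀ x ∈ P, par hd x = c) :
    ∀ x ∈ P, Even (cOffset n P x) := by
  intro x hx
  obtain ⟨hgpos, hgmem⟩ := cOffset_mem (x := x) (NeZero.pos n) hx
  set g := cOffset n P x
  have h1 : par hd x - par hd (x - (g : ZMod n)) = ((g : ℕ) : ZMod 2) := by
    rw [← par_natCast hd g, ← map_sub]; ring_nf
  rw [hc x hx, hc _ hgmem, sub_self] at h1
  exact (natCast_zmod2_eq_zero_iff g).mp h1.symm

end Parity

def nadj (n : ℕ) (σ : Finset (ℕ × ZMod n)) : Prop := ∀ v ∈ σ, ∀ w ∈ σ, ¬ cylAdj n v w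

noncomputable def Bidx (n a b : ℕ) [NeZero n] (C : Finset (ZMod n)) : Finset (Finset (ℕ × ZMod n)) :=
  ((Finset.Icc a b) ×ˢ Finset.univ).powerset.filter
    (fun σ => nadj n σ ∧ ∀ j : ZMod n, (a, j) ∈ σ → j ∈ C)

noncomputable def Bsum (n a b : ℕ) [NeZero n] (C : Finset (ZMod n)) : ℤ :=
  ∑ σ ∈ Bidx n a b C, (-1 : ℤ)^σ.card

noncomputable def Widx (n k : ℕ) [NeZero n] (S : Finset (ZMod n)) : Finset (Finset (ℕ × ZMod n)) :=
  ((Finset.Icc 2 k) ×ˢ Finset.univ).powerset.filter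
    (fun τ => nadj n τ ∧ ∀ j ∈ S, ((2:ℕ), j) ∉ τ)

noncomputable def Wsum (n k : ℕ) [NeZero n] (S : Finset (ZMod n)) : ℤ :=
  ∑ τ ∈ Widx n k S, (-1 : ℤ)^τ.card

section Sums
variable {n : ℕ} [NeZero n]

lemma mem_Bidx {a b : ℕ} {C : Finset (ZMod n)} {σ : Finset (ℕ × ZMod n)} :
    σ ∈ Bidx n a b C ↔ (∀ v ∈ σ, a ≤ v.1 ∧ v.1 ≤ b) ∧ nadj n σ ∧
      ∀ j : ZMod n, (a, j) ∈ σ → j ∈ C := by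
  simp only [Bidx, mem_filter, mem_powerset, and_congr_left_iff]
  intro _
  constructor
  · intro h v hv; have := h hv; rw [Finset.mem_product, Finset.mem_Icc] at this; exact this.1
  · intro h v hv; rw [Finset.mem_product, Finset.mem_Icc]; exact ⟨h v hv, Finset.mem_univ _⟩

lemma mem_Widx {k : ℕ} {S : Finset (ZMod n)} {τ : Finset (ℕ × ZMod n)} :
    τ ∈ Widx n k S ↔ (∀ v ∈ τ, 2 ≤ v.1 ∧ v.1 ≤ k) ∧ nadj n τ ∧
      ∀ j ∈ S, ((2:ℕ), j) ∉ τ := by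
  simp only [Widx, mem_filter, mem_powerset, and_congr_left_iff]
  intro _
  constructor
  · intro h v hv; have := h hv; rw [Finset.mem_product, Finset.mem_Icc] at this; exact this.1
  · intro h v hv; rw [Finset.mem_product, Finset.mem_Icc]; exact ⟨h v hv, Finset.mem_univ _⟩

lemma mem_Fidx {k : ℕ} {C : Finset (ZMod n)} {τ : Finset (ℕ × ZMod n)} :
    τ ∈ ((Finset.Icc 2 k) ×ˢ (Finset.univ : Finset (ZMod n))).powerset.filter
        (fun τ => nadj n τ ∧ ∀ j ∈ C, ((2:ℕ), j) ∈ τ)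
      ↔ (∀ v ∈ τ, 2 ≤ v.1 ∧ v.1 ≤ k) ∧ nadj n τ ∧ ∀ j ∈ C, ((2:ℕ), j) ∈ τ := by
  simp only [mem_filter, mem_powerset, and_congr_left_iff]
  intro _
  constructor
  · intro h v hv; have := h hv; rw [Finset.mem_product, Finset.mem_Icc] at this; exact this.1
  · intro h v hv; rw [Finset.mem_product, Finset.mem_Icc]; exact ⟨h v hv, Finset.mem_univ _⟩

omit [NeZero n] in
lemma nadj_subset {σ τ : Finset (ℕ × ZMod n)} (h : τ ⊆ σ) (hσ : nadj n σ) : nadj n τ :=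
  fun v hv w hw => hσ v (h hv) w (h hw)

omit [NeZero n] in
lemma cylAdj_symm {v w : ℕ × ZMod n} (h : cylAdj n v w) : cylAdj n w v := by
  obtain ⟨hne, hc⟩ := h
  exact ⟨fun he => hne he.symm, by tauto⟩

omit [NeZero n] in
lemma mem_piRow {σ : Finset (ℕ × ZMod n)} {j : ZMod n} :
    j ∈ piRow n σ ↔ ((1:ℕ), j) ∈ σ := by
  simp only [piRow, Finset.mem_image, Finset.mem_filter]
  constructor
  · rintro ⟨v, ⟨hv, h1⟩, rfl⟩
    rwa [show ((1:ℕ), v.2) = v from Prod.ext h1.symm rfl]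
  · intro h; exact ⟨(1, j), ⟨h, rfl⟩, rfl⟩

lemma Zcyl_eq_Bsum (m : ℕ) : Zcyl m n = Bsum n 1 m Finset.univ := by
  rw [Zcyl, Bsum]
  rw [show {σ : Finset (ℕ × ZMod n) | cylIndep m n σ} = ↑(Bidx n 1 m Finset.univ) by
    ext σ
    simp only [Set.mem_setOf_eq, Finset.coe_filter, mem_coe, mem_Bidx, cylIndep]
    simp [nadj]]
  exact finsum_mem_coe_finset _ _

/-- row shift by one -/
lemma Bsum_shift (a b : ℕ) (C : Finset (ZMod n)) :
    Bsum n (a+1) (b+1) C = Bsum n a b C := by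
  rw [Bsum, Bsum]
  refine Finset.sum_nbij' (fun σ => σ.image (fun v => (v.1 - 1, v.2)))
    (fun σ => σ.image (fun v => (v.1 + 1, v.2))) ?_ ?_ ?_ ?_ ?_
  · -- forward membership
    intro σ hσ
    rw [mem_Bidx] at hσ ⊢
    obtain ⟨hrows, hind, hrow1⟩ := hσ
    refine ⟨?_, ?_, ?_⟩
    · intro v hv
      simp only [Finset.mem_image] at hv
      obtain ⟨w, hw, rfl⟩ := hv
      have := hrows w hw; constructor <;> simp <;> omega
    · intro v hv w hw hadj
      simp only [Finset.mem_image] at hv hw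
      obtain ⟨v', hv', rfl⟩ := hv
      obtain ⟨w', hw', rfl⟩ := hw
      refine hind v' hv' w' hw' ?_
      obtain ⟨hne, hcase⟩ := hadj
      have hv1 := (hrows v' hv').1; have hw1 := (hrows w' hw').1
      constructor
      · intro h; exact hne (by rw [h])
      · simp only at hcase ⊢
        rcases hcase with ⟨h1, h2⟩ | ⟨h1, h2⟩
        · exact Or.inl ⟨by omega, h2⟩
        · exact Or.inr ⟨h1, by omega⟩
    · intro j hj
      simp only [Finset.mem_image] at hj
      obtain ⟨w, hw, hweq⟩ := hj
      have hw1 := (hrows w hw).1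
      have : w = (a+1, j) := by
        have h1 : w.1 - 1 = a := congrArg Prod.fst hweq
        have h2 : w.2 = j := congrArg Prod.snd hweq
        have : w.1 = a + 1 := by omega
        exact Prod.ext this h2
      exact hrow1 j (this ▸ hw)
  · -- backward membership
    intro σ hσ
    rw [mem_Bidx] at hσ ⊢
    obtain ⟨hrows, hind, hrow1⟩ := hσ
    refine ⟨?_, ?_, ?_⟩
    · intro v hv
      simp only [Finset.mem_image] at hv
      obtain ⟨w, hw, rfl⟩ := hv
      have := hrows w hw; constructor <;> simp <;> omega
    · intro v hv w hw hadj
      simp only [Finset.mem_image] at hv hw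
      obtain ⟨v', hv', rfl⟩ := hv
      obtain ⟨w', hw', rfl⟩ := hw
      refine hind v' hv' w' hw' ?_
      obtain ⟨hne, hcase⟩ := hadj
      constructor
      · intro h; exact hne (by rw [h])
      · simp only at hcase ⊢
        rcases hcase with ⟨h1, h2⟩ | ⟨h1, h2⟩
        · exact Or.inl ⟨by omega, h2⟩
        · exact Or.inr ⟨h1, by omega⟩
    · intro j hj
      simp only [Finset.mem_image] at hj
      obtain ⟨w, hw, hweq⟩ := hj
      have : w = (a, j) := by
        have h1 : w.1 + 1 = a + 1 := congrArg Prod.fst hweq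
        have h2 : w.2 = j := congrArg Prod.snd hweq
        exact Prod.ext (by omega) h2
      exact hrow1 j (this ▸ hw)
  · -- left inverse
    intro σ hσ
    rw [mem_Bidx] at hσ
    rw [Finset.image_image]
    ext v
    simp only [Finset.mem_image, Function.comp_apply]
    constructor
    · rintro ⟨w, hw, rfl⟩
      have h1 := (hσ.1 w hw).1
      simpa [show w.1 - 1 + 1 = w.1 by omega] using hw
    · intro hv
      refine ⟨v, hv, ?_⟩
      have h1 := (hσ.1 v hv).1
      exact Prod.ext (by omega) rfl
  · -- right inverse
    intro σ hσ
    rw [Finset.image_image]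
    ext v
    simp only [Finset.mem_image, Function.comp_apply]
    constructor
    · rintro ⟨w, hw, rfl⟩
      simpa using hw
    · intro hv
      exact ⟨v, hv, Prod.ext (by omega) rfl⟩
  · -- card equality
    intro σ hσ
    rw [mem_Bidx] at hσ
    congr 1
    rw [Finset.card_image_of_injOn]
    intro v hv w hw h
    have hv1 := (hσ.1 v hv).1; have hw1 := (hσ.1 w hw).1
    simp only [Prod.ext_iff] at h ⊢
    exact ⟨by omega, h.2⟩

lemma Bsum_split (k : ℕ) (hk : 1 ≤ k) (C : Finset (ZMod n)) (hC : ∀ j ∈ C, j + 1 ∉ C) :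
    Bsum n 1 k C = ∑ S ∈ C.powerset, (-1 : ℤ)^S.card * Wsum n k S := by
  have hRHS : ∀ S ∈ C.powerset, (-1 : ℤ)^S.card * Wsum n k S
      = ∑ τ ∈ Widx n k S, (-1:ℤ)^(S.card + τ.card) := by
    intro S _
    rw [Wsum, Finset.mul_sum]
    exact Finset.sum_congr rfl fun τ _ => by rw [pow_add]
  rw [Finset.sum_congr rfl hRHS, ← Finset.sum_sigma (C.powerset) (fun S => Widx n k S)
    (fun p => (-1:ℤ)^(p.1.card + p.2.card))]
  rw [Bsum]
  refine Finset.sum_nbij' (fun σ => ⟨piRow n σ, σ.filter (fun v => ¬ v.1 = 1)⟩)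
    (fun p => (p.1.image (fun c => ((1:ℕ), c))) ∪ p.2) ?_ ?_ ?_ ?_ ?_
  · -- forward membership
    intro σ hσ
    rw [mem_Bidx] at hσ
    obtain ⟨hrows, hind, hrow1⟩ := hσ
    rw [Finset.mem_sigma, Finset.mem_powerset, mem_Widx]
    refine ⟨fun j hj => hrow1 j (mem_piRow.mp hj), ?_, nadj_subset (Finset.filter_subset _ _) hind, ?_⟩
    · intro v hv
      rw [Finset.mem_filter] at hv
      have := hrows v hv.1
      have := hv.2
      omega
    · intro j hj h2
      rw [Finset.mem_filter] at h2
      refine hind _ (mem_piRow.mp hj) _ h2.1 ?_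
      exact ⟨by simp, Or.inr ⟨rfl, Or.inl rfl⟩⟩
  · -- backward membership
    rintro ⟨S, τ⟩ hp
    rw [Finset.mem_sigma, Finset.mem_powerset, mem_Widx] at hp
    obtain ⟨hS, hrows, hind, havoid⟩ := hp
    rw [mem_Bidx]
    have himg : ∀ v ∈ S.image (fun c => ((1:ℕ), c)), v.1 = 1 ∧ v.2 ∈ S := by
      intro v hv
      simp only [Finset.mem_image] at hv
      obtain ⟨c, hc, rfl⟩ := hv
      exact ⟨rfl, hc⟩
    refine ⟨?_, ?_, ?_⟩
    · intro v hv
      rw [Finset.mem_union] at hv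
      rcases hv with hv | hv
      · have := himg v hv; omega
      · have := hrows v hv; omega
    · -- independence
      have key : ∀ v ∈ S.image (fun c => ((1:ℕ), c)), ∀ w ∈ S.image (fun c => ((1:ℕ), c)) ∪ τ,
          ¬ cylAdj n v w := by
        intro v hv w hw hadj
        obtain ⟨hv1, hv2⟩ := himg v hv
        obtain ⟨hne, hcase⟩ := hadj
        rw [Finset.mem_union] at hw
        rcases hw with hw | hw
        · obtain ⟨hw1, hw2⟩ := himg w hw
          rcases hcase with ⟨h1, h2⟩ | ⟨h1, h2⟩
          · rcases h2 with h2 | h2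
            · exact hC v.2 (hS hv2) (h2 ▸ hS hw2)
            · exact hC w.2 (hS hw2) (h2 ▸ hS hv2)
          · omega
        · have hw1 := (hrows w hw).1
          rcases hcase with ⟨h1, h2⟩ | ⟨h1, h2⟩
          · omega
          · have hw12 : w.1 = 2 := by omega
            have : w = ((2:ℕ), v.2) := Prod.ext hw12 h1.symm
            exact havoid v.2 hv2 (this ▸ hw)
      intro v hv w hw hadj
      rw [Finset.mem_union] at hv hw
      rcases hv with hv | hv
      · exact key v hv w (Finset.mem_union.mpr hw) hadj
      · rcases hw with hw | hw
        · exact key w hw v (Finset.mem_union.mpr (Or.inr hv)) (cylAdj_symm hadj)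
        · exact hind v hv w hw hadj
    · intro j hj
      rw [Finset.mem_union] at hj
      rcases hj with hj | hj
      · exact hS (himg _ hj).2
      · have := (hrows _ hj).1; omega
  · -- left inverse
    intro σ hσ
    rw [mem_Bidx] at hσ
    simp only
    ext v
    rw [Finset.mem_union, Finset.mem_image, Finset.mem_filter]
    constructor
    · rintro (⟨c, hc, rfl⟩ | ⟨hv, _⟩)
      · exact mem_piRow.mp hc
      · exact hv
    · intro hv
      by_cases h1 : v.1 = 1
      · have hveq : v = ((1:ℕ), v.2) := Prod.ext h1 rfl
        exact Or.inl ⟨v.2, mem_piRow.mpr (hveq ▸ hv), hveq.symm⟩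
      · exact Or.inr ⟨hv, h1⟩
  · -- right inverse
    rintro ⟨S, τ⟩ hp
    rw [Finset.mem_sigma, Finset.mem_powerset, mem_Widx] at hp
    obtain ⟨hS, hrows, hind, havoid⟩ := hp
    simp only
    have h1 : piRow n (S.image (fun c => ((1:ℕ), c)) ∪ τ) = S := by
      ext j
      rw [mem_piRow, Finset.mem_union, Finset.mem_image]
      constructor
      · rintro (⟨c, hc, hceq⟩ | hj)
        · rwa [show c = j from congrArg Prod.snd hceq] at hc
        · have := (hrows _ hj).1; omega
      · intro hj; exact Or.inl ⟨j, hj, rfl⟩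
    have h2 : (S.image (fun c => ((1:ℕ), c)) ∪ τ).filter (fun v => ¬ v.1 = 1) = τ := by
      ext v
      rw [Finset.mem_filter, Finset.mem_union, Finset.mem_image]
      constructor
      · rintro ⟨⟨c, hc, hceq⟩ | hv, hne⟩
        · exact absurd (congrArg Prod.fst hceq).symm hne
        · exact hv
      · intro hv
        have := (hrows _ hv).1
        exact ⟨Or.inr hv, by omega⟩
    exact Sigma.ext h1 (heq_of_eq h2)
  · -- values
    intro σ hσ
    rw [mem_Bidx] at hσ
    simp only
    congr 1
    have hsplit : σ.card = (σ.filter (fun v => v.1 = 1)).card + (σ.filter (fun v => ¬ v.1 = 1)).card :=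
      (Finset.card_filter_add_card_filter_not (s := σ) (fun v : ℕ × ZMod n => v.1 = 1)).symm
    rw [hsplit]
    congr 1
    rw [piRow, Finset.card_image_of_injOn]
    intro v hv w hw h
    rw [Finset.mem_coe, Finset.mem_filter] at hv hw
    exact Prod.ext (hv.2.trans hw.2.symm) h

lemma interchange (k : ℕ) (C : Finset (ZMod n)) :
    ∑ S ∈ C.powerset, (-1 : ℤ)^S.card * Wsum n k S
      = ∑ τ ∈ ((Finset.Icc 2 k) ×ˢ Finset.univ).powerset.filter
          (fun τ => nadj n τ ∧ ∀ j ∈ C, ((2:ℕ), j) ∈ τ), (-1:ℤ)^τ.card := by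
  set T := ((Finset.Icc 2 k) ×ˢ (Finset.univ : Finset (ZMod n))).powerset.filter (fun τ => nadj n τ) with hT
  have hW : ∀ S : Finset (ZMod n), Wsum n k S
      = ∑ τ ∈ T, if (∀ j ∈ S, ((2:ℕ), j) ∉ τ) then (-1:ℤ)^τ.card else 0 := by
    intro S
    rw [hT, ← Finset.sum_filter, Finset.filter_filter, Wsum, Widx]
  calc ∑ S ∈ C.powerset, (-1 : ℤ)^S.card * Wsum n k S
      = ∑ S ∈ C.powerset, ∑ τ ∈ T,
          (if (∀ j ∈ S, ((2:ℕ), j) ∉ τ) then (-1:ℤ)^(S.card)*(-1:ℤ)^τ.card else 0) := by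
        refine Finset.sum_congr rfl fun S _ => ?_
        rw [hW S, Finset.mul_sum]
        exact Finset.sum_congr rfl fun τ _ => by rw [mul_ite, mul_zero]
    _ = ∑ τ ∈ T, ∑ S ∈ C.powerset,
          (if (∀ j ∈ S, ((2:ℕ), j) ∉ τ) then (-1:ℤ)^(S.card)*(-1:ℤ)^τ.card else 0) :=
        Finset.sum_comm
    _ = ∑ τ ∈ T, (if (∀ j ∈ C, ((2:ℕ), j) ∈ τ) then (-1:ℤ)^τ.card else 0) := by
        refine Finset.sum_congr rfl fun τ _ => ?_
        rw [← Finset.sum_filter]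
        have hfil : C.powerset.filter (fun S => ∀ j ∈ S, ((2:ℕ), j) ∉ τ)
            = (C.filter (fun j => ((2:ℕ), j) ∉ τ)).powerset := by
          ext S
          rw [Finset.mem_filter, Finset.mem_powerset, Finset.mem_powerset]
          constructor
          · rintro ⟨h1, h2⟩ j hj
            exact Finset.mem_filter.mpr ⟨h1 hj, h2 j hj⟩
          · intro h
            constructor
            · intro j hj; exact (Finset.mem_filter.mp (h hj)).1
            · intro j hj; exact (Finset.mem_filter.mp (h hj)).2
        rw [hfil, ← Finset.sum_mul, Finset.sum_powerset_neg_one_pow_card, ite_mul, one_mul, zero_mul]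
        congr 1
        rw [eq_iff_iff, Finset.filter_eq_empty_iff]
        simp only [not_not]
    _ = ∑ τ ∈ T.filter (fun τ => ∀ j ∈ C, ((2:ℕ), j) ∈ τ), (-1:ℤ)^τ.card :=
        (Finset.sum_filter _ _).symm
    _ = _ := by rw [hT, Finset.filter_filter]

lemma row2_full (k : ℕ) (hk : 2 ≤ k) (hn1 : (1 : ZMod n) ≠ 0)
    (C : Finset (ZMod n)) (hC : ∀ j ∈ C, j + 1 ∉ C) (hCc : ∀ j : ZMod n, j ∉ C → j + 1 ∈ C) :
    ∑ τ ∈ ((Finset.Icc 2 k) ×ˢ Finset.univ).powerset.filter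
        (fun τ => nadj n τ ∧ ∀ j ∈ C, ((2:ℕ), j) ∈ τ), (-1:ℤ)^τ.card
      = (-1:ℤ)^C.card * Bsum n 3 k Cᶜ := by
  have hrow2 : ∀ τ ∈ ((Finset.Icc 2 k) ×ˢ (Finset.univ : Finset (ZMod n))).powerset.filter
      (fun τ => nadj n τ ∧ ∀ j ∈ C, ((2:ℕ), j) ∈ τ),
      ∀ j : ZMod n, ((2:ℕ), j) ∈ τ → j ∈ C := by
    intro τ hτ j hj
    rw [mem_Fidx] at hτ
    obtain ⟨hrows, hind, hfull⟩ := hτ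
    by_contra hjC
    have h1 : ((2:ℕ), j + 1) ∈ τ := hfull _ (hCc j hjC)
    refine hind _ hj _ h1 ⟨?_, Or.inl ⟨rfl, Or.inl rfl⟩⟩
    intro he
    have := congrArg Prod.snd he
    simp only at this
    refine hn1 ?_
    have h2 := congrArg (fun z => z - j) this
    simp only [sub_self] at h2
    rw [show j + 1 - j = 1 by ring] at h2
    exact h2.symm
  rw [Bsum, Finset.mul_sum]
  rw [show (fun τ' : Finset (ℕ × ZMod n) => (-1:ℤ)^C.card * (-1:ℤ)^τ'.card)
    = (fun τ' => (-1:ℤ)^(C.card + τ'.card)) from funext fun τ' => by rw [pow_add]]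
  refine Finset.sum_nbij' (fun τ => τ.filter (fun v => ¬ v.1 = 2))
    (fun τ' => (C.image (fun j => ((2:ℕ), j))) ∪ τ') ?_ ?_ ?_ ?_ ?_
  · intro τ hτ
    have hr2 := hrow2 τ hτ
    rw [mem_Fidx] at hτ
    obtain ⟨hrows, hind, hfull⟩ := hτ
    rw [mem_Bidx]
    refine ⟨?_, nadj_subset (Finset.filter_subset _ _) hind, ?_⟩
    · intro v hv
      rw [Finset.mem_filter] at hv
      have := hrows v hv.1; have := hv.2; omega
    · intro j hj
      rw [Finset.mem_filter] at hj
      rw [Finset.mem_compl]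
      intro hjC
      refine hind _ (hfull j hjC) _ hj.1 ⟨?_, Or.inr ⟨rfl, Or.inl rfl⟩⟩
      intro he; exact absurd (congrArg Prod.fst he) (by simp)
  · intro τ' hτ'
    rw [mem_Bidx] at hτ'
    obtain ⟨hrows, hind, hrow3⟩ := hτ'
    rw [mem_Fidx]
    have himg : ∀ v ∈ C.image (fun j => ((2:ℕ), j)), v.1 = 2 ∧ v.2 ∈ C := by
      intro v hv
      simp only [Finset.mem_image] at hv
      obtain ⟨c, hc, rfl⟩ := hv
      exact ⟨rfl, hc⟩
    refine ⟨?_, ?_, ?_⟩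
    · intro v hv
      rw [Finset.mem_union] at hv
      rcases hv with hv | hv
      · have := himg v hv; omega
      · have := hrows v hv; omega
    · have key : ∀ v ∈ C.image (fun j => ((2:ℕ), j)), ∀ w ∈ (C.image (fun j => ((2:ℕ), j))) ∪ τ',
          ¬ cylAdj n v w := by
        intro v hv w hw hadj
        obtain ⟨hv1, hv2⟩ := himg v hv
        obtain ⟨hne, hcase⟩ := hadj
        rw [Finset.mem_union] at hw
        rcases hw with hw | hw
        · obtain ⟨hw1, hw2⟩ := himg w hw
          rcases hcase with ⟨h1, h2⟩ | ⟨h1, h2⟩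
          · rcases h2 with h2 | h2
            · exact hC v.2 hv2 (h2 ▸ hw2)
            · exact hC w.2 hw2 (h2 ▸ hv2)
          · omega
        · have hw1 := (hrows w hw).1
          rcases hcase with ⟨h1, h2⟩ | ⟨h1, h2⟩
          · omega
          · have hw13 : w.1 = 3 := by omega
            have hww : w = ((3:ℕ), v.2) := Prod.ext hw13 h1.symm
            have := hrow3 v.2 (hww ▸ hw)
            rw [Finset.mem_compl] at this
            exact this hv2
      intro v hv w hw hadj
      rw [Finset.mem_union] at hv hw
      rcases hv with hv | hv
      · exact key v hv w (Finset.mem_union.mpr hw) hadj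
      · rcases hw with hw | hw
        · exact key w hw v (Finset.mem_union.mpr (Or.inr hv)) (cylAdj_symm hadj)
        · exact hind v hv w hw hadj
    · intro j hj
      exact Finset.mem_union.mpr (Or.inl (Finset.mem_image.mpr ⟨j, hj, rfl⟩))
  · -- left inverse
    intro τ hτ
    have hr2 := hrow2 τ hτ
    rw [mem_Fidx] at hτ
    obtain ⟨hrows, hind, hfull⟩ := hτ
    ext v
    rw [Finset.mem_union, Finset.mem_image, Finset.mem_filter]
    constructor
    · rintro (⟨c, hc, rfl⟩ | ⟨hv, _⟩)
      · exact hfull c hc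
      · exact hv
    · intro hv
      by_cases h2 : v.1 = 2
      · have hveq : v = ((2:ℕ), v.2) := Prod.ext h2 rfl
        exact Or.inl ⟨v.2, hr2 v.2 (hveq ▸ hv), hveq.symm⟩
      · exact Or.inr ⟨hv, h2⟩
  · -- right inverse
    intro τ' hτ'
    rw [mem_Bidx] at hτ'
    obtain ⟨hrows, hind, hrow3⟩ := hτ'
    ext v
    rw [Finset.mem_filter, Finset.mem_union, Finset.mem_image]
    constructor
    · rintro ⟨⟨c, hc, hceq⟩ | hv, hne⟩
      · exact absurd (congrArg Prod.fst hceq).symm hne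
      · exact hv
    · intro hv
      have := (hrows _ hv).1
      exact ⟨Or.inr hv, by omega⟩
  · -- values
    intro τ hτ
    have hr2 := hrow2 τ hτ
    rw [mem_Fidx] at hτ
    obtain ⟨hrows, hind, hfull⟩ := hτ
    congr 1
    have hsplit : τ.card = (τ.filter (fun v => v.1 = 2)).card + (τ.filter (fun v => ¬ v.1 = 2)).card :=
      (Finset.card_filter_add_card_filter_not (s := τ) (fun v : ℕ × ZMod n => v.1 = 2)).symm
    rw [hsplit]
    congr 1
    have heq : τ.filter (fun v => v.1 = 2) = C.image (fun j => ((2:ℕ), j)) := by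
      ext v
      rw [Finset.mem_filter, Finset.mem_image]
      constructor
      · rintro ⟨hv, h2⟩
        have hveq : v = ((2:ℕ), v.2) := Prod.ext h2 rfl
        exact ⟨v.2, hr2 v.2 (hveq ▸ hv), hveq.symm⟩
      · rintro ⟨c, hc, rfl⟩
        exact ⟨hfull c hc, rfl⟩
    rw [heq, Finset.card_image_of_injective _ (fun a b h => (Prod.mk.injEq _ _ _ _).mp h |>.2)]

end Sums

section Classes
open Finset
open scoped Classical
variable {n : ℕ} [NeZero n] (hd : 2 ∣ n)

noncomputable def cls (c : ZMod 2) : Finset (ZMod n) :=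
  Finset.univ.filter (fun x => par hd x = c)

lemma mem_cls {c : ZMod 2} {x : ZMod n} : x ∈ cls hd c ↔ par hd x = c := by
  simp [cls]

lemma par_add_one (x : ZMod n) : par hd (x + 1) = par hd x + 1 := by
  rw [map_add, map_one]

lemma cls_spread (c : ZMod 2) : ∀ j ∈ cls hd c, j + 1 ∉ cls hd c := by
  intro j hj hj1
  rw [mem_cls] at hj hj1
  rw [par_add_one, hj] at hj1
  exact (by decide : ∀ c : ZMod 2, ¬ c + 1 = c) c hj1

lemma cls_cover (c : ZMod 2) : ∀ j : ZMod n, j ∉ cls hd c → j + 1 ∈ cls hd c := by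
  intro j hj
  rw [mem_cls] at hj ⊢
  rw [par_add_one]
  exact (by decide : ∀ a c : ZMod 2, ¬ a = c → a + 1 = c) _ _ hj

lemma cls_compl (c : ZMod 2) : (cls hd c)ᶜ = cls hd (c + 1) := by
  ext x
  rw [Finset.mem_compl, mem_cls, mem_cls]
  exact (by decide : ∀ a c : ZMod 2, ¬ a = c ↔ a = c + 1) _ _

lemma cls_card (c : ZMod 2) : (cls hd c).card = n / 2 := by
  have hle : ∀ c : ZMod 2, (cls hd c).card ≤ (cls hd (c+1)).card := by
    intro c
    apply Finset.card_le_card_of_injOn (fun x => x + 1)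
    · intro x hx
      rw [Finset.mem_coe, mem_cls] at hx ⊢
      rw [par_add_one, hx]
    · intro a _ b _ h
      exact add_left_injective _ h
  have h11 : c + 1 + 1 = c := (by decide : ∀ c : ZMod 2, c + 1 + 1 = c) c
  have heq : (cls hd c).card = (cls hd (c+1)).card :=
    le_antisymm (hle c) (by have := hle (c+1); rwa [h11] at this)
  have hunion : cls hd c ∪ cls hd (c+1) = Finset.univ := by
    ext x
    simp only [Finset.mem_union, mem_cls, Finset.mem_univ, iff_true]
    exact (by decide : ∀ a c : ZMod 2, a = c ∨ a = c + 1) _ _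
  have hdis : Disjoint (cls hd c) (cls hd (c+1)) := by
    rw [Finset.disjoint_left]
    intro x hx hx1
    rw [mem_cls] at hx hx1
    exact (by decide : ∀ c : ZMod 2, ¬ c = c + 1) c (hx ▸ hx1)
  have hcard := congrArg Finset.card hunion
  rw [Finset.card_union_of_disjoint hdis, ← heq, Finset.card_univ, ZMod.card n] at hcard
  omega

lemma cls_nonempty (hn2 : 2 ≤ n) (c : ZMod 2) : (cls hd c).Nonempty := by
  rw [← Finset.card_pos, cls_card]
  omega

omit hd in
lemma Bsum_zero_rows (C : Finset (ZMod n)) : Bsum n 1 0 C = 1 := by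
  rw [Bsum]
  have h : Bidx n 1 0 C = {∅} := by
    ext σ
    rw [mem_Bidx, Finset.mem_singleton]
    constructor
    · rintro ⟨hrows, -, -⟩
      rw [Finset.eq_empty_iff_forall_notMem]
      intro v hv
      have := hrows v hv
      omega
    · rintro rfl
      refine ⟨by intro v hv; simp at hv, by intro v hv; simp at hv, by intro j hj; simp at hj⟩
  rw [h, Finset.sum_singleton, Finset.card_empty, pow_zero]

omit hd in
lemma Wsum_one (S : Finset (ZMod n)) : Wsum n 1 S = 1 := by
  rw [Wsum]
  have h : Widx n 1 S = {∅} := by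
    ext τ
    rw [mem_Widx, Finset.mem_singleton]
    constructor
    · rintro ⟨hrows, -, -⟩
      rw [Finset.eq_empty_iff_forall_notMem]
      intro v hv
      have := hrows v hv
      omega
    · rintro rfl
      refine ⟨by intro v hv; simp at hv, by intro v hv; simp at hv, by intro j _ hj; simp at hj⟩
  rw [h, Finset.sum_singleton, Finset.card_empty, pow_zero]

omit hd in
lemma Bsum_one_rows (C : Finset (ZMod n)) (hC : ∀ j ∈ C, j + 1 ∉ C) (hne : C.Nonempty) :
    Bsum n 1 1 C = 0 := by
  rw [Bsum_split 1 le_rfl C hC]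
  rw [Finset.sum_congr rfl (fun S _ => by rw [Wsum_one, mul_one])]
  rw [Finset.sum_powerset_neg_one_pow_card, if_neg]
  exact Finset.nonempty_iff_ne_empty.mp hne

lemma Bsum_rec (k : ℕ) (hk : 2 ≤ k) (hn2 : 2 ≤ n) (c : ZMod 2) :
    Bsum n 1 k (cls hd c) = (-1:ℤ)^(n/2) * Bsum n 1 (k-2) (cls hd (c+1)) := by
  have hn1 : (1 : ZMod n) ≠ 0 := by
    haveI : Fact (1 < n) := ⟨hn2⟩
    exact one_ne_zero
  obtain ⟨k', rfl⟩ : ∃ k', k = k' + 2 := ⟨k - 2, by omega⟩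
  rw [Nat.add_sub_cancel]
  rw [Bsum_split (k'+2) (by omega) _ (cls_spread hd c), interchange,
      row2_full (k'+2) (by omega) hn1 _ (cls_spread hd c) (cls_cover hd c), cls_compl, cls_card]
  congr 1
  calc Bsum n 3 (k'+2) (cls hd (c+1))
      = Bsum n (2+1) ((k'+1)+1) (cls hd (c+1)) := rfl
    _ = Bsum n 2 (k'+1) (cls hd (c+1)) := Bsum_shift _ _ _
    _ = Bsum n (1+1) (k'+1) (cls hd (c+1)) := rfl
    _ = Bsum n 1 k' (cls hd (c+1)) := Bsum_shift _ _ _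

lemma Bsum_cls_closed (hn2 : 2 ≤ n) :
    ∀ j : ℕ, ∀ c : ZMod 2,
      Bsum n 1 (2*j) (cls hd c) = (-1:ℤ)^((n/2)*j) ∧ Bsum n 1 (2*j+1) (cls hd c) = 0 := by
  intro j
  induction j with
  | zero =>
    intro c
    constructor
    · rw [show 2*0 = 0 by omega, Bsum_zero_rows, mul_zero, pow_zero]
    · rw [show 2*0+1 = 1 by omega]
      exact Bsum_one_rows _ (cls_spread hd c) (cls_nonempty hd hn2 c)
  | succ j ih =>
    intro c
    constructor
    · have h := Bsum_rec hd (2*(j+1)) (by omega) hn2 c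
      rw [show 2*(j+1) - 2 = 2*j by omega] at h
      rw [h, (ih (c+1)).1, ← pow_add]
      congr 1
      ring
    · have h := Bsum_rec hd (2*(j+1)+1) (by omega) hn2 c
      rw [show 2*(j+1)+1 - 2 = 2*j+1 by omega] at h
      rw [h, (ih (c+1)).2, mul_zero]

end Classes

open Finset in
/-- For `m ≥ 2` and even `n ≥ 2`, the sum of `(−1)^{|σ|}` over all
independent sets `σ` of `C_{m,n}` with `π(σ) ≠ ∅` and all cyclic gaps of `π(σ)`
even equals `−2·Z(C_{m−1,n}) + 2·(−1)^{mn/4}` if `m` is even, and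
`−2·Z(C_{m−1,n})` if `m` is odd. -/
theorem P2_sum (m n : ℕ) (hm : 2 ≤ m) (hn : 2 ≤ n) (hne : Even n) :
    (∑ᶠ σ ∈ {σ : Finset (ℕ × ZMod n) | cylIndep m n σ ∧ (piRow n σ).Nonempty ∧
        ∀ x ∈ piRow n σ, Even (cOffset n (piRow n σ) x)}, (-1 : ℤ) ^ σ.card) =
      -2 * Zcyl (m - 1) n +
        (if Even m then 2 * (-1 : ℤ) ^ (m * n / 4) else 0) := by
    classical
  haveI : NeZero n := ⟨by omega⟩
  have hd : 2 ∣ n := even_iff_two_dvd.mp hne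
  obtain ⟨m', rfl⟩ : ∃ m', m = m' + 1 := ⟨m - 1, by omega⟩
  rw [Nat.add_sub_cancel]
  set G : ZMod 2 → Finset (Finset (ℕ × ZMod n)) :=
    fun c => (Bidx n 1 (m'+1) (cls hd c)).filter (fun σ => (piRow n σ).Nonempty) with hG
  have hGmem : ∀ (c : ZMod 2) (σ : Finset (ℕ × ZMod n)), σ ∈ G c ↔
      ((∀ v ∈ σ, 1 ≤ v.1 ∧ v.1 ≤ m'+1) ∧ nadj n σ ∧
        (∀ j : ZMod n, ((1:ℕ), j) ∈ σ → j ∈ cls hd c)) ∧ (piRow n σ).Nonempty := by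
    intro c σ
    rw [hG]
    simp only
    rw [Finset.mem_filter, mem_Bidx]
  have hset : {σ : Finset (ℕ × ZMod n) | cylIndep (m'+1) n σ ∧ (piRow n σ).Nonempty ∧
        ∀ x ∈ piRow n σ, Even (cOffset n (piRow n σ) x)} = ↑(G 0 ∪ G 1) := by
    ext σ
    rw [Set.mem_setOf_eq, Finset.mem_coe, Finset.mem_union, hGmem, hGmem]
    constructor
    · rintro ⟨⟨hrows, hind⟩, hne', heven⟩
      obtain ⟨x0, hx0⟩ := hne'
      have hsame := same_parity_of_gaps_even hd heven
      have hcls : ∀ j : ZMod n, ((1:ℕ), j) ∈ σ → j ∈ cls hd (par hd x0) := fun j hj =>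
        (mem_cls hd).mpr (hsame j (mem_piRow.mpr hj) x0 hx0)
      rcases (by decide : ∀ c : ZMod 2, c = 0 ∨ c = 1) (par hd x0) with h | h
      · exact Or.inl ⟨⟨hrows, hind, h ▸ hcls⟩, ⟨x0, hx0⟩⟩
      · exact Or.inr ⟨⟨hrows, hind, h ▸ hcls⟩, ⟨x0, hx0⟩⟩
    · rintro (⟨⟨hrows, hind, hcls⟩, hne'⟩ | ⟨⟨hrows, hind, hcls⟩, hne'⟩)
      · exact ⟨⟨hrows, hind⟩, hne', gaps_even_of_same_parity hd
          (fun x hx => (mem_cls hd).mp (hcls x (mem_piRow.mp hx)))⟩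
      · exact ⟨⟨hrows, hind⟩, hne', gaps_even_of_same_parity hd
          (fun x hx => (mem_cls hd).mp (hcls x (mem_piRow.mp hx)))⟩
  rw [hset, finsum_mem_coe_finset]
  have hdisj : Disjoint (G 0) (G 1) := by
    rw [Finset.disjoint_left]
    intro σ h0 h1
    rw [hGmem] at h0 h1
    obtain ⟨x, hx⟩ := h0.2
    have e0 : x ∈ cls hd 0 := h0.1.2.2 x (mem_piRow.mp hx)
    have e1 : x ∈ cls hd 1 := h1.1.2.2 x (mem_piRow.mp hx)
    rw [mem_cls hd] at e0 e1
    exact (by decide : (0 : ZMod 2) ≠ 1) (e0 ▸ e1)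
  rw [Finset.sum_union hdisj]
  have hGsum : ∀ c : ZMod 2, ∑ σ ∈ G c, (-1:ℤ)^σ.card
      = Bsum n 1 (m'+1) (cls hd c) - Zcyl m' n := by
    intro c
    have hsplit := Finset.sum_filter_add_sum_filter_not (Bidx n 1 (m'+1) (cls hd c))
      (fun σ => (piRow n σ).Nonempty) (fun σ => (-1:ℤ)^σ.card)
    have hneg : (Bidx n 1 (m'+1) (cls hd c)).filter (fun σ => ¬ (piRow n σ).Nonempty)
        = Bidx n 2 (m'+1) Finset.univ := by
      ext σ
      rw [Finset.mem_filter, mem_Bidx, mem_Bidx]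
      constructor
      · rintro ⟨⟨hrows, hind, -⟩, hnone⟩
        refine ⟨?_, hind, fun j _ => Finset.mem_univ j⟩
        intro v hv
        have h1 := hrows v hv
        by_cases h2 : v.1 = 1
        · exact absurd ⟨v.2, mem_piRow.mpr ((Prod.ext h2 rfl : v = ((1:ℕ), v.2)) ▸ hv)⟩ hnone
        · omega
      · rintro ⟨hrows, hind, -⟩
        refine ⟨⟨fun v hv => by have := hrows v hv; omega, hind,
          fun j hj => absurd ((hrows _ hj).1) (by omega)⟩, ?_⟩
        rintro ⟨x, hx⟩
        have := (hrows _ (mem_piRow.mp hx)).1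
        omega
    have hZ : ∑ σ ∈ Bidx n 2 (m'+1) Finset.univ, (-1:ℤ)^σ.card = Zcyl m' n := by
      rw [Zcyl_eq_Bsum]
      calc ∑ σ ∈ Bidx n 2 (m'+1) Finset.univ, (-1:ℤ)^σ.card
          = Bsum n (1+1) (m'+1) Finset.univ := rfl
        _ = Bsum n 1 m' Finset.univ := Bsum_shift _ _ _
    rw [hneg, hZ] at hsplit
    have hB : Bsum n 1 (m'+1) (cls hd c) = ∑ σ ∈ Bidx n 1 (m'+1) (cls hd c), (-1:ℤ)^σ.card := rfl
    rw [hG]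
    simp only
    rw [hB]
    linarith [hsplit]
  rw [hGsum 0, hGsum 1]
  rcases Nat.even_or_odd (m'+1) with hev | hod
  · obtain ⟨a, ha⟩ := hev
    have hma : m'+1 = 2*a := by omega
    obtain ⟨b, hb⟩ := hne
    have hnb : n = 2*b := by omega
    have h0 := (Bsum_cls_closed hd hn a (0 : ZMod 2)).1
    have h1 := (Bsum_cls_closed hd hn a (1 : ZMod 2)).1
    rw [hma, h0, h1, if_pos (even_two_mul a)]
    have hexp : 2*a*n/4 = (n/2)*a := by
      subst hnb
      have e1 : 2*a*(2*b) = 4*(b*a) := by ring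
      have e2 : 2*b/2 = b := by omega
      rw [e1, e2, Nat.mul_div_cancel_left _ (by norm_num : 0 < 4)]
    rw [hexp]
    ring
  · obtain ⟨a, ha⟩ := hod
    rw [ha]
    have h0 := (Bsum_cls_closed hd hn a (0 : ZMod 2)).2
    have h1 := (Bsum_cls_closed hd hn a (1 : ZMod 2)).2
    rw [h0, h1, if_neg (by simp [Nat.even_add_one, parity_simps])]
    ring
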